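/- Let $q$ be a power of an odd prime $p$ and $e$ a divisor of $q-1$ with $k = (q-1)/e$. If $p > \tfrac{3k}{2} - 1$, then every cyclotomic number satisfies $(a,b)_e \leq \lceil k/2 \rceil$ for all $0 \le a, b < e$. -/
import Mathlib


open Finset Polynomial

/-- The cyclotomic number `(a,b)_e`: the number of `v ∈ F \\ {0,-1}` with
`ind_γ v ≡ a (mod e)` and `ind_γ (v+1) ≡ b (mod e)`. -/
noncomputable def cycNum {F : Type*} [Field F] [Fintype F] (γ : F) (e a b : ℕ) : ℕ :=
  Nat.card {v : F // v ≠ 0 ∧ v ≠ -1 ∧ (∃ m : ℕ, γ ^ m = v ∧ m % e = a % e) ∧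
    (∃ n : ℕ, γ ^ n = v + 1 ∧ n % e = b % e)}

theorem stmt_19 {F : Type*} [Field F] [Fintype F] (p r e k : ℕ) (hp : p.Prime) (hpodd : Odd p)
    (hcard : Fintype.card F = p ^ r) (he : e ∣ Fintype.card F - 1)
    (hk : k = (Fintype.card F - 1) / e)
    (γ : F) (hγ : ∀ x : F, x ≠ 0 → ∃ m : ℕ, γ ^ m = x)
    (hp2 : (p : ℚ) > 3 * k / 2 - 1) :
    ∀ a b : ℕ, a < e → b < e → cycNum γ e a b ≤ ⌈(k : ℚ) / 2⌉₊ := by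
  classical
  intro a b ha hb
  have hq2 : 1 < Fintype.card F := Fintype.one_lt_card
  have hr : r ≠ 0 := by rintro rfl; simp at hcard; omega
  have hpne2 : p ≠ 2 := by rcases hpodd with ⟨t, ht⟩; omega
  have hp3 : 3 ≤ p := by have := hp.two_le; omega
  have hq3 : 3 ≤ Fintype.card F := by
    rw [hcard]; calc 3 ≤ p := hp3
      _ ≤ p ^ r := Nat.le_self_pow hr p
  -- γ ≠ 0
  have hγ0 : γ ≠ 0 := by
    rintro rfl
    obtain ⟨x, hx⟩ : ∃ x : F, x ∉ ({0, 1} : Finset F) := by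
      by_contra h
      push_neg at h
      have hsub : (univ : Finset F) ⊆ {0, 1} := fun x _ => h x
      have := Finset.card_le_card hsub
      have h2 : ({0, 1} : Finset F).card ≤ 2 := Finset.card_insert_le _ _ |>.trans (by simp)
      rw [Finset.card_univ] at this
      omega
    simp only [Finset.mem_insert, Finset.mem_singleton, not_or] at hx
    obtain ⟨m, hm⟩ := hγ x hx.1
    rcases Nat.eq_zero_or_pos m with rfl | hm0
    · simp at hm; exact hx.2 hm.symm
    · rw [zero_pow (by omega)] at hm; exact hx.1 hm.symm
  have hek : e * k = Fintype.card F - 1 := by rw [hk]; exact Nat.mul_div_cancel' he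
  have hk1 : k ≠ 0 := by rintro rfl; simp at hek; omega
  have hγ1 : γ ^ (e * k) = 1 := by rw [hek]; exact FiniteField.pow_card_sub_one_eq_one γ hγ0
  have hpow : ∀ m n : ℕ, m % e = n % e → γ ^ (m * k) = γ ^ (n * k) := by
    intro m n h
    rw [pow_eq_pow_mod (m * k) hγ1, pow_eq_pow_mod (n * k) hγ1,
      Nat.mul_mod_mul_right, Nat.mul_mod_mul_right, h]
  -- characteristic
  have hchar : CharP F p := by
    have h1 : Nat.Prime (ringChar F) := CharP.char_is_prime F (ringChar F)
    obtain ⟨n, -, hn⟩ := FiniteField.card F (ringChar F)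
    have hd1 : p ∣ ringChar F ^ (n : ℕ) := by
      rw [← hn, hcard]; exact dvd_pow_self p hr
    have : p = ringChar F := (Nat.prime_dvd_prime_iff_eq hp h1).mp (hp.dvd_of_dvd_pow hd1)
    rw [this]; exact ringChar.charP F
  have hcast : ∀ n : ℕ, (n : F) = 0 ↔ p ∣ n := fun n => CharP.cast_eq_zero_iff F p n
  set c := γ ^ (a * k) with hc
  set d := γ ^ (b * k) with hd
  have hc0 : c ≠ 0 := pow_ne_zero _ hγ0
  set T : Finset F := univ.filter (fun v => v ^ k = c ∧ (v + 1) ^ k = d) with hT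
  -- step 1 : cycNum ≤ T.card
  have hstep1 : cycNum γ e a b ≤ T.card := by
    have h1 : cycNum γ e a b = (univ.filter (fun v : F => v ≠ 0 ∧ v ≠ -1 ∧
        (∃ m : ℕ, γ ^ m = v ∧ m % e = a % e) ∧
        (∃ n : ℕ, γ ^ n = v + 1 ∧ n % e = b % e))).card := by
      rw [show cycNum γ e a b = Nat.card {v : F // v ≠ 0 ∧ v ≠ -1 ∧
        (∃ m : ℕ, γ ^ m = v ∧ m % e = a % e) ∧
        (∃ n : ℕ, γ ^ n = v + 1 ∧ n % e = b % e)} from rfl,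
        Nat.card_eq_fintype_card, Fintype.card_subtype]
    rw [h1]
    apply Finset.card_le_card
    intro v hv
    simp only [hT, mem_filter, mem_univ, true_and] at hv ⊢
    obtain ⟨h0, h1, ⟨m, hm, hme⟩, ⟨n, hn, hne⟩⟩ := hv
    constructor
    · rw [← hm, ← pow_mul]; exact hpow m a hme
    · rw [← hn, ← pow_mul]; exact hpow n b hne
  -- step 2 : final arithmetic given 2 * T.card ≤ k + 1
  suffices h2T : 2 * T.card ≤ k + 1 by
    have hceil : (k + 1) / 2 ≤ ⌈(k : ℚ) / 2⌉₊ := by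
      rcases Nat.even_or_odd k with ⟨j, hj⟩ | ⟨j, hj⟩
      · subst hj
        have h2 : ((j + j : ℕ) : ℚ) / 2 = (j : ℚ) := by push_cast; ring
        rw [h2, Nat.ceil_natCast]; omega
      · subst hj
        have hj1 : ((j : ℕ) : ℚ) < ((2 * j + 1 : ℕ) : ℚ) / 2 := by push_cast; linarith
        have := Nat.lt_ceil.mpr hj1
        omega
    omega
  -- step 3 : main bound
  by_cases hdvd : p ∣ (k + 1)
  · -- forces k = 2
    have hk2 : k = 2 := by
      have hple : p ≤ k + 1 := Nat.le_of_dvd (by omega) hdvd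
      have h4 : k < 4 := by
        have hq' : (p : ℚ) ≤ (k : ℚ) + 1 := by exact_mod_cast hple
        have : (k : ℚ) < 4 := by linarith
        exact_mod_cast this
      have hk1' : 1 ≤ k := by omega
      interval_cases k
      · exfalso; have := Nat.le_of_dvd (by norm_num) hdvd; omega
      · rfl
      · exfalso
        have h22 : p ∣ 2 := hp.dvd_of_dvd_pow (show p ∣ 2 ^ 2 by norm_num; exact hdvd)
        have := Nat.le_of_dvd (by norm_num) h22
        omega
    subst hk2
    have h2ne : (2 : F) ≠ 0 := by
      rw [show (2 : F) = ((2 : ℕ) : F) by norm_num, Ne, hcast]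
      intro h
      have := Nat.le_of_dvd (by norm_num) h
      omega
    have hT1 : T.card ≤ 1 := by
      rw [Finset.card_le_one]
      intro x hx y hy
      simp only [hT, mem_filter, mem_univ, true_and] at hx hy
      obtain ⟨hx1, hx2⟩ := hx
      obtain ⟨hy1, hy2⟩ := hy
      have h5 : (2 : F) * x = 2 * y := by
        have e1 : x ^ 2 = y ^ 2 := by rw [hx1, hy1]
        have e2 : (x + 1) ^ 2 = (y + 1) ^ 2 := by rw [hx2, hy2]
        linear_combination e2 - e1
      exact mul_left_cancel₀ h2ne h5
    omega
  · -- polynomial argument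
    have hK1F : ((k : F) + 1) ≠ 0 := by
      intro h
      exact hdvd ((hcast (k + 1)).mp (by push_cast; exact h))
    set P : Polynomial F := C d * X ^ (k + 1) - C c * (X + 1) ^ (k + 1) + C (c * d) with hP
    have hder : derivative P = C ((k : F) + 1) * (C d * X ^ k - C c * (X + 1) ^ k) := by
      rw [hP]
      simp only [derivative_add, derivative_sub, derivative_mul, derivative_C,
        derivative_X_pow, derivative_pow, derivative_X, derivative_one, Nat.add_sub_cancel,
        Nat.cast_add, Nat.cast_one]
      ring
    have hdne : derivative P ≠ 0 := by
      intro h0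
      have heval := congrArg (eval 0) h0
      rw [hder] at heval
      simp only [eval_mul, eval_sub, eval_add, eval_pow, eval_C, eval_X, eval_zero, eval_one,
        zero_pow hk1, zero_add, one_pow, mul_zero, mul_one, zero_sub, mul_neg] at heval
      exact (mul_ne_zero hK1F hc0) (by linear_combination -heval)
    have hPne : P ≠ 0 := fun h0 => hdne (by rw [h0, derivative_zero])
    have hdvd2 : ∀ v ∈ T, (X - C v) ^ 2 ∣ P := by
      intro v hv
      simp only [hT, mem_filter, mem_univ, true_and] at hv
      obtain ⟨hv1, hv2⟩ := hv
      have hroot : P.IsRoot v := by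
        simp only [IsRoot, hP, eval_add, eval_sub, eval_mul, eval_pow, eval_C, eval_X, eval_one]
        rw [pow_succ, pow_succ, hv1, hv2]; ring
      obtain ⟨Q, hQ⟩ := dvd_iff_isRoot.mpr hroot
      have hde : eval v (derivative P) = 0 := by
        rw [hder]
        simp only [eval_mul, eval_sub, eval_add, eval_pow, eval_C, eval_X, eval_one]
        rw [hv1, hv2]; ring
      have hrootQ : Q.IsRoot v := by
        have hd2 : derivative P = Q + (X - C v) * derivative Q := by
          rw [hQ]
          simp only [derivative_mul, derivative_sub, derivative_X, derivative_C, sub_zero,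
            one_mul]
        have := congrArg (eval v) hd2
        rw [hde] at this
        simp only [eval_add, eval_mul, eval_sub, eval_X, eval_C, sub_self, zero_mul,
          add_zero] at this
        exact this.symm
      obtain ⟨R, hR⟩ := dvd_iff_isRoot.mpr hrootQ
      exact ⟨R, by rw [hQ, hR]; ring⟩
    have hcount : ∀ v ∈ T, 2 ≤ P.roots.count v := by
      intro v hv
      rw [count_roots]
      exact (le_rootMultiplicity_iff hPne).mpr (hdvd2 v hv)
    have hms : (2 • T.val : Multiset F) ≤ P.roots := by
      rw [Multiset.le_iff_count]
      intro x
      rw [Multiset.count_nsmul]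
      by_cases hx : x ∈ T
      · rw [Multiset.count_eq_one_of_mem T.nodup (Finset.mem_def.mp hx)]
        simpa using hcount x hx
      · rw [Multiset.count_eq_zero_of_notMem (fun hh => hx (Finset.mem_def.mpr hh))]
        simp
    have hdeg : P.natDegree ≤ k + 1 := by
      rw [hP]
      compute_degree
    have h1 := Multiset.card_le_card hms
    rw [Multiset.card_nsmul] at h1
    have h2 := card_roots' P
    have h3 : T.card = Multiset.card T.val := rfl
    omega
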